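/- arXiv:1908.07444 — 6 statements merged into one kernel-verified Lean document; each statement's English description precedes it below -/
import Mathlib

section
/- Let ν be a Jacobi measure with parameters 0 < l < 1 and β > 1, let d > 0, and define H(τ) := d^{-1}∫_l^1 t²/((Re τ + t)² + (Im τ)²) dν(t) for τ ∈ ℂ. Then: (a) for every fixed x ∈ ℝ, the function y ↦ H(x + iy) is strictly decreasing on (0, ∞); (b) for every fixed x ∈ ℝ, H(x + iy) → 0 as y → ∞; (c) for every fixed x ∈ (−1, −l), H(x + iy) → ∞ as y → 0⁺; consequently, for every x ∈ (−1, −l) there exists a unique y > 0 such that H(x + iy) = 1. -/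
open MeasureTheory Set

noncomputable def jacobiDensity (l β Z : ℝ) (f : ℝ → ℝ) : ℝ → ℝ :=
  Set.indicator (Set.Icc l 1) (fun t => Z⁻¹ * (1 - t) ^ β * f t)

/-- `ν` is a Jacobi measure with parameters `l`, `β`, profile `f` and normalizing constant `Z`. -/
structure IsJacobi (ν : Measure ℝ) (l β : ℝ) (f : ℝ → ℝ) (Z : ℝ) : Prop where
  l_pos : 0 < l
  l_lt_one : l < 1
  f_C1 : ContDiffOn ℝ 1 f (Set.Icc l 1)
  f_pos : ∀ t ∈ Set.Icc l 1, 0 < f t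
  Z_def : Z = ∫ t in Set.Icc l 1, (1 - t) ^ β * f t
  eq_density : ν = volume.withDensity (fun t => ENNReal.ofReal (jacobiDensity l β Z f t))
  prob : IsProbabilityMeasure ν

set_option linter.unusedVariables false

namespace JacobiAux

open scoped ENNReal

noncomputable def g (x y t : ℝ) : ℝ := t ^ 2 / ((x + t) ^ 2 + y ^ 2)

theorem den_pos {y : ℝ} (hy : y ≠ 0) (x t : ℝ) : 0 < (x + t) ^ 2 + y ^ 2 := by positivity

theorem g_nonneg (x y t : ℝ) : 0 ≤ g x y t := by unfold g; positivity

theorem g_cont {y : ℝ} (hy : y ≠ 0) (x : ℝ) : Continuous (g x y) := by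
  unfold g
  exact Continuous.div (by continuity) (by continuity) fun t => (den_pos hy x t).ne'

variable {ν : Measure ℝ} {l β : ℝ} {f : ℝ → ℝ} {Z : ℝ}

theorem ae_Icc (hν : IsJacobi ν l β f Z) : ∀ᵐ t ∂ν, t ∈ Icc l 1 := by
  rw [ae_iff, hν.eq_density]
  have hs : MeasurableSet {a : ℝ | ¬ a ∈ Icc l 1} := measurableSet_Icc.compl
  rw [withDensity_apply _ hs,
    setLIntegral_congr_fun hs (fun t ht => ?_), lintegral_zero]
  rw [jacobiDensity, indicator_of_notMem ht, ENNReal.ofReal_zero]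

theorem one_le_meas (hν : IsJacobi ν l β f Z) {s : Set ℝ} (hs : Icc l 1 ⊆ s) : 1 ≤ ν s := by
  haveI := hν.prob
  have h0 : ν {a : ℝ | ¬ a ∈ Icc l 1} = 0 := by
    have := ae_Icc hν; rwa [ae_iff] at this
  calc (1 : ℝ≥0∞) = ν univ := measure_univ.symm
    _ ≤ ν s + ν {a : ℝ | ¬ a ∈ Icc l 1} := by
        refine le_trans (measure_mono fun a _ => ?_) (measure_union_le _ _)
        by_cases h : a ∈ Icc l 1
        · exact Or.inl (hs h)
        · exact Or.inr h
    _ = ν s := by rw [h0, add_zero]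

theorem integrable_g (hν : IsJacobi ν l β f Z) (x : ℝ) {y : ℝ} (hy : y ≠ 0) :
    Integrable (g x y) ν := by
  haveI := hν.prob
  refine Integrable.mono' (integrable_const ((y ^ 2)⁻¹)) ((g_cont hy x).aestronglyMeasurable) ?_
  filter_upwards [ae_Icc hν] with t ht
  rw [Real.norm_eq_abs, abs_of_nonneg (g_nonneg x y t)]
  have h1 : t ^ 2 ≤ 1 := by nlinarith [ht.1, ht.2, hν.l_pos]
  have h2 : y ^ 2 ≤ (x + t) ^ 2 + y ^ 2 := le_add_of_nonneg_left (sq_nonneg _)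
  have h3 : (0:ℝ) < y ^ 2 := by positivity
  calc g x y t ≤ 1 / y ^ 2 := div_le_div₀ zero_le_one h1 h3 h2
    _ = (y ^ 2)⁻¹ := one_div _

theorem integral_strict (hν : IsJacobi ν l β f Z) (x : ℝ) {y1 y2 : ℝ}
    (h1 : 0 < y1) (h12 : y1 < y2) : ∫ t, g x y2 t ∂ν < ∫ t, g x y1 t ∂ν := by
  have h2 : 0 < y2 := h1.trans h12
  have hi1 := integrable_g hν x h1.ne'
  have hi2 := integrable_g hν x h2.ne'
  have key : 0 < ∫ t, (g x y1 t - g x y2 t) ∂ν := by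
    have hi : Integrable (fun t => g x y1 t - g x y2 t) ν := hi1.sub hi2
    rw [integral_pos_iff_support_of_nonneg_ae ?_ hi]
    · refine lt_of_lt_of_le zero_lt_one (one_le_meas hν fun t ht => ?_)
      have ht0 : 0 < t := lt_of_lt_of_le hν.l_pos ht.1
      have d1 : 0 < (x + t) ^ 2 + y1 ^ 2 := den_pos h1.ne' x t
      have dlt : (x + t) ^ 2 + y1 ^ 2 < (x + t) ^ 2 + y2 ^ 2 := by nlinarith
      have : g x y2 t < g x y1 t :=
        div_lt_div_of_pos_left (by positivity) d1 dlt
      simp only [Function.mem_support]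
      intro hc
      rw [sub_eq_zero] at hc
      exact absurd hc (ne_of_gt this)
    · refine Filter.Eventually.of_forall fun t => ?_
      have d1 : 0 < (x + t) ^ 2 + y1 ^ 2 := den_pos h1.ne' x t
      have dle : (x + t) ^ 2 + y1 ^ 2 ≤ (x + t) ^ 2 + y2 ^ 2 := by nlinarith
      have : g x y2 t ≤ g x y1 t :=
        div_le_div₀ (sq_nonneg t) le_rfl d1 dle
      simpa [sub_nonneg] using this
  rw [integral_sub hi1 hi2] at key
  linarith

theorem Z_pos (hν : IsJacobi ν l β f Z) : 0 < Z := by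
  by_contra h
  push_neg at h
  have hinv : Z⁻¹ ≤ 0 := inv_nonpos.mpr h
  have hzero : (fun t => ENNReal.ofReal (jacobiDensity l β Z f t)) = fun _ => 0 := by
    funext t
    rw [ENNReal.ofReal_eq_zero]
    unfold jacobiDensity
    by_cases ht : t ∈ Icc l 1
    · rw [indicator_of_mem ht]
      have h1 : (0:ℝ) ≤ (1 - t) ^ β := Real.rpow_nonneg (by linarith [ht.2]) _
      have h2 : 0 ≤ f t := (hν.f_pos t ht).le
      rw [mul_assoc]
      exact mul_nonpos_iff.mpr (Or.inr ⟨hinv, mul_nonneg h1 h2⟩)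
    · rw [indicator_of_notMem ht]
  have hν0 : ν = 0 := by rw [hν.eq_density, hzero]; simp
  haveI := hν.prob
  have h1 : ν univ = 1 := measure_univ
  rw [hν0] at h1
  simp at h1

theorem contAt (hν : IsJacobi ν l β f Z) (x : ℝ) {y0 : ℝ} (hy0 : 0 < y0) :
    ContinuousAt (fun y => ∫ t, g x y t ∂ν) y0 := by
  haveI := hν.prob
  apply continuousAt_of_dominated (bound := fun _ => ((y0 / 2) ^ 2)⁻¹)
  · filter_upwards [eventually_gt_nhds (half_lt_self hy0)] with y hy
    exact (g_cont (by linarith : (0:ℝ) < y).ne' x).aestronglyMeasurable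
  · filter_upwards [eventually_gt_nhds (half_lt_self hy0)] with y hy
    filter_upwards [ae_Icc hν] with t ht
    rw [Real.norm_eq_abs, abs_of_nonneg (g_nonneg x y t)]
    have h1 : t ^ 2 ≤ 1 := by nlinarith [ht.1, ht.2, hν.l_pos]
    have h0 : (0:ℝ) < (y0 / 2) ^ 2 := by positivity
    have h2 : (y0 / 2) ^ 2 ≤ (x + t) ^ 2 + y ^ 2 := by nlinarith [sq_nonneg (x + t)]
    calc g x y t ≤ 1 / (y0 / 2) ^ 2 := div_le_div₀ zero_le_one h1 h0 h2
      _ = ((y0 / 2) ^ 2)⁻¹ := one_div _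
  · exact integrable_const _
  · refine Filter.Eventually.of_forall fun t => ?_
    have : ContinuousAt (fun y : ℝ => (x + t) ^ 2 + y ^ 2) y0 := by fun_prop
    exact continuousAt_const.div this (den_pos hy0.ne' x t).ne'

theorem blowup (hν : IsJacobi ν l β f Z) (hβ : 1 < β) {x : ℝ}
    (hx : x ∈ Ioo (-1 : ℝ) (-l)) :
    ∃ C > (0:ℝ), ∃ δ > (0:ℝ), ∀ y : ℝ, 0 < y → y ≤ δ → C / y ≤ ∫ t, g x y t ∂ν := by
  haveI := hν.prob
  have hl := hν.l_pos
  have ha1 : l < -x := by linarith [hx.2]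
  have ha2 : -x < 1 := by linarith [hx.1]
  set a := -x with ha
  set δ := min (a - l) (1 - a) / 2 with hδdef
  have hδ : 0 < δ := by
    have : 0 < min (a - l) (1 - a) := lt_min (by linarith) (by linarith)
    simp only [hδdef]; linarith
  have hδ1 : δ < a - l := by
    have := min_le_left (a - l) (1 - a); simp only [hδdef]; linarith
  have hδ2 : δ < 1 - a := by
    have := min_le_right (a - l) (1 - a); simp only [hδdef]; linarith
  have hKsub : Icc (a - δ) (a + δ) ⊆ Ioo l 1 := by
    intro t ht
    exact ⟨by linarith [ht.1], by linarith [ht.2]⟩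
  have hKIcc : Icc (a - δ) (a + δ) ⊆ Icc l 1 := fun t ht =>
    ⟨(hKsub ht).1.le, (hKsub ht).2.le⟩
  have hρcont : ContinuousOn (fun t => Z⁻¹ * (1 - t) ^ β * f t) (Icc (a - δ) (a + δ)) := by
    refine (continuousOn_const.mul ?_).mul (hν.f_C1.continuousOn.mono hKIcc)
    refine ContinuousOn.rpow_const (by fun_prop) fun t ht => Or.inl ?_
    have := (hKsub ht).2
    intro hc; linarith [sub_eq_zero.mp hc]
  obtain ⟨t0, ht0K, ht0min⟩ := isCompact_Icc.exists_isMinOn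
    ⟨a, by constructor <;> [linarith; linarith]⟩ hρcont
  set m := Z⁻¹ * (1 - t0) ^ β * f t0 with hm_def
  have hm : 0 < m :=
    mul_pos (mul_pos (inv_pos.mpr (Z_pos hν))
      (Real.rpow_pos_of_pos (by linarith [(hKsub ht0K).2]) β)) (hν.f_pos t0 (hKIcc ht0K))
  refine ⟨l ^ 2 * m, by positivity, δ, hδ, fun y hy hyδ => ?_⟩
  set S := Icc (a - y) (a + y) with hS_def
  have hSmeas : MeasurableSet S := measurableSet_Icc
  have hSK : S ⊆ Icc (a - δ) (a + δ) := Icc_subset_Icc (by linarith) (by linarith)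
  have hSIcc : S ⊆ Icc l 1 := fun t ht => hKIcc (hSK ht)
  have hνS : ENNReal.ofReal m * ENNReal.ofReal (2 * y) ≤ ν S := by
    have h1 : ν S = ∫⁻ t in S, ENNReal.ofReal (jacobiDensity l β Z f t) ∂volume := by
      rw [hν.eq_density]; exact withDensity_apply _ hSmeas
    have h2 : ∫⁻ t in S, ENNReal.ofReal m ∂volume ≤
        ∫⁻ t in S, ENNReal.ofReal (jacobiDensity l β Z f t) ∂volume := by
      refine lintegral_mono_ae ?_
      rw [ae_restrict_iff' hSmeas]
      refine Filter.Eventually.of_forall fun t ht => ENNReal.ofReal_le_ofReal ?_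
      rw [jacobiDensity, indicator_of_mem (hSIcc ht)]
      exact ht0min (hSK ht)
    rw [setLIntegral_const] at h2
    have h3 : volume S = ENNReal.ofReal (2 * y) := by
      rw [hS_def, Real.volume_Icc]; congr 1; ring
    rw [h3] at h2
    rw [h1]; exact h2
  have hνS' : m * (2 * y) ≤ (ν S).toReal := by
    have := ENNReal.toReal_mono (measure_ne_top ν S) hνS
    rwa [ENNReal.toReal_mul, ENNReal.toReal_ofReal hm.le,
      ENNReal.toReal_ofReal (by linarith)] at this
  have hc1 : l ^ 2 / (2 * y ^ 2) * (ν S).toReal ≤ ∫ t in S, g x y t ∂ν := by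
    refine setIntegral_ge_of_const_le_real hSmeas (measure_ne_top ν S) (fun t ht => ?_)
      ((integrable_g hν x hy.ne').integrableOn)
    have htl : l ≤ t := (hSIcc ht).1
    have h1 : l ^ 2 ≤ t ^ 2 := by nlinarith
    have h2 : (x + t) ^ 2 + y ^ 2 ≤ 2 * y ^ 2 := by
      have h3 : a - y ≤ t := ht.1
      have h4 : t ≤ a + y := ht.2
      have h5 : (x + t) ^ 2 ≤ y ^ 2 := by
        have : x + t = t - a := by rw [ha]; ring
        rw [this]; nlinarith
      linarith
    exact div_le_div₀ (sq_nonneg t) h1 (den_pos hy.ne' x t) h2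
  have hfinal : ∫ t in S, g x y t ∂ν ≤ ∫ t, g x y t ∂ν :=
    setIntegral_le_integral (integrable_g hν x hy.ne')
      (Filter.Eventually.of_forall (g_nonneg x y))
  calc l ^ 2 * m / y = l ^ 2 / (2 * y ^ 2) * (m * (2 * y)) := by
        field_simp
    _ ≤ l ^ 2 / (2 * y ^ 2) * (ν S).toReal :=
        mul_le_mul_of_nonneg_left hνS' (by positivity)
    _ ≤ ∫ t in S, g x y t ∂ν := hc1
    _ ≤ ∫ t, g x y t ∂ν := hfinal

end JacobiAux

/-- Stieltjes transform of a measure on ℝ. -/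
noncomputable def stieltjes (μ : Measure ℝ) (z : ℂ) : ℂ := ∫ x, ((x : ℂ) - z)⁻¹ ∂μ


/-- properties of `H(τ) = d⁻¹ ∫ t²/((Re τ + t)² + (Im τ)²) dν(t)`:
strict monotonicity in `Im τ`, decay at infinity, blow-up at the real axis for
`Re τ ∈ (−1, −l)`, and the resulting unique solvability of `H = 1`. -/
theorem H_monotone_limits_and_unique_solution
    (ν : Measure ℝ) (l β : ℝ) (f : ℝ → ℝ) (Z : ℝ)
    (hν : IsJacobi ν l β f Z) (hβ : 1 < β)
    (d : ℝ) (hd : 0 < d)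
    (H : ℂ → ℝ)
    (hH : ∀ τ : ℂ, H τ = d⁻¹ * ∫ t, t ^ 2 / ((τ.re + t) ^ 2 + τ.im ^ 2) ∂ν) :
    (∀ x : ℝ, StrictAntiOn (fun y : ℝ => H (x + y * Complex.I)) (Set.Ioi 0)) ∧
    (∀ x : ℝ, Filter.Tendsto (fun y : ℝ => H (x + y * Complex.I)) Filter.atTop (nhds 0)) ∧
    (∀ x ∈ Set.Ioo (-1 : ℝ) (-l),
      Filter.Tendsto (fun y : ℝ => H (x + y * Complex.I))
        (nhdsWithin 0 (Set.Ioi 0)) Filter.atTop) ∧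
    (∀ x ∈ Set.Ioo (-1 : ℝ) (-l), ∃! y : ℝ, 0 < y ∧ H (x + y * Complex.I) = 1) := by
  haveI := hν.prob
  have hrepr : ∀ x y : ℝ, H (x + y * Complex.I) = d⁻¹ * ∫ t, JacobiAux.g x y t ∂ν := by
    intro x y
    rw [hH]
    congr 1
    refine integral_congr_ae (Filter.Eventually.of_forall fun t => ?_)
    simp [JacobiAux.g, Complex.add_re, Complex.add_im, Complex.mul_re, Complex.mul_im,
      Complex.I_re, Complex.I_im, Complex.ofReal_re, Complex.ofReal_im]
  have hmono : ∀ x : ℝ, StrictAntiOn (fun y : ℝ => H (x + y * Complex.I)) (Set.Ioi 0) := by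
    intro x y1 hy1 y2 _hy2 h12
    simp only [hrepr]
    exact mul_lt_mul_of_pos_left
      (JacobiAux.integral_strict hν x (Set.mem_Ioi.mp hy1) h12) (inv_pos.mpr hd)
  have hdecay : ∀ x : ℝ, Filter.Tendsto (fun y : ℝ => H (x + y * Complex.I))
      Filter.atTop (nhds 0) := by
    intro x
    have hub : Filter.Tendsto (fun y : ℝ => d⁻¹ * (y ^ 2)⁻¹) Filter.atTop (nhds 0) := by
      have h1 := (Filter.tendsto_pow_atTop (α := ℝ) (n := 2) two_ne_zero).inv_tendsto_atTop
      have h2 := h1.const_mul d⁻¹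
      simpa using h2
    refine tendsto_of_tendsto_of_tendsto_of_le_of_le' tendsto_const_nhds hub ?_ ?_
    · filter_upwards with y
      rw [hrepr]
      exact mul_nonneg (inv_nonneg.mpr hd.le)
        (integral_nonneg fun t => JacobiAux.g_nonneg x y t)
    · filter_upwards [Filter.eventually_gt_atTop (0:ℝ)] with y hy
      rw [hrepr]
      refine mul_le_mul_of_nonneg_left ?_ (inv_nonneg.mpr hd.le)
      have hmon : ∫ t, JacobiAux.g x y t ∂ν ≤ ∫ _t, (y ^ 2)⁻¹ ∂ν := by
        refine integral_mono_ae (JacobiAux.integrable_g hν x hy.ne')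
          (integrable_const _) ?_
        filter_upwards [JacobiAux.ae_Icc hν] with t ht
        have h1 : t ^ 2 ≤ 1 := by nlinarith [ht.1, ht.2, hν.l_pos]
        have h2 : y ^ 2 ≤ (x + t) ^ 2 + y ^ 2 := le_add_of_nonneg_left (sq_nonneg _)
        calc JacobiAux.g x y t ≤ 1 / y ^ 2 := div_le_div₀ zero_le_one h1 (by positivity) h2
          _ = (y ^ 2)⁻¹ := one_div _
      rwa [integral_const, probReal_univ, one_smul] at hmon
  have hblow : ∀ x ∈ Set.Ioo (-1:ℝ) (-l),
      Filter.Tendsto (fun y : ℝ => H (x + y * Complex.I))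
        (nhdsWithin 0 (Set.Ioi 0)) Filter.atTop := by
    intro x hx
    obtain ⟨C, hC, δ, hδ, hbound⟩ := JacobiAux.blowup hν hβ hx
    have h1 : Filter.Tendsto (fun y : ℝ => d⁻¹ * C * y⁻¹)
        (nhdsWithin 0 (Set.Ioi 0)) Filter.atTop :=
      Filter.Tendsto.const_mul_atTop (by positivity) tendsto_inv_nhdsGT_zero
    refine Filter.tendsto_atTop_mono' _ ?_ h1
    filter_upwards [Ioc_mem_nhdsGT_of_mem ⟨le_refl (0:ℝ), hδ⟩] with y hy
    rw [hrepr]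
    have h2 : d⁻¹ * C * y⁻¹ = d⁻¹ * (C / y) := by rw [div_eq_mul_inv, mul_assoc]
    rw [h2]
    exact mul_le_mul_of_nonneg_left (hbound y hy.1 hy.2) (inv_nonneg.mpr hd.le)
  refine ⟨hmono, hdecay, hblow, ?_⟩
  intro x hx
  have hcont : ContinuousOn (fun y : ℝ => H (x + y * Complex.I)) (Set.Ioi 0) := by
    intro y hy
    have h1 : ContinuousAt (fun y : ℝ => d⁻¹ * ∫ t, JacobiAux.g x y t ∂ν) y :=
      (JacobiAux.contAt hν x (Set.mem_Ioi.mp hy)).const_mul d⁻¹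
    have h2 : (fun y : ℝ => H (x + y * Complex.I))
        = fun y : ℝ => d⁻¹ * ∫ t, JacobiAux.g x y t ∂ν := funext fun y => hrepr x y
    rw [h2]
    exact h1.continuousWithinAt
  have hev1 : ∀ᶠ y : ℝ in nhdsWithin 0 (Set.Ioi 0),
      1 < H (x + y * Complex.I) ∧ 0 < y := by
    filter_upwards [(hblow x hx).eventually (Filter.eventually_gt_atTop (1:ℝ)),
      self_mem_nhdsWithin] with y h1 h2
    exact ⟨h1, h2⟩
  obtain ⟨y1, hy1H, hy1pos⟩ := hev1.exists
  have hev2 : ∀ᶠ y : ℝ in Filter.atTop, H (x + y * Complex.I) < 1 ∧ y1 < y := by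
    filter_upwards [(hdecay x).eventually (eventually_lt_nhds (zero_lt_one : (0:ℝ) < 1)),
      Filter.eventually_gt_atTop y1] with y h1 h2
    exact ⟨h1, h2⟩
  obtain ⟨y2, hy2H, h12⟩ := hev2.exists
  have hsub : Set.Icc y1 y2 ⊆ Set.Ioi 0 := fun t ht => lt_of_lt_of_le hy1pos ht.1
  have hIVT := intermediate_value_Icc' h12.le (hcont.mono hsub)
  obtain ⟨y, hymem, hyval⟩ := hIVT ⟨hy2H.le, hy1H.le⟩
  have hypos : 0 < y := lt_of_lt_of_le hy1pos hymem.1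
  refine ⟨y, ⟨hypos, hyval⟩, fun y' hy' => ?_⟩
  exact (hmono x).injOn (Set.mem_Ioi.mpr hy'.1) (Set.mem_Ioi.mpr hypos)
    (by show H _ = H _; rw [hy'.2]; exact hyval.symm)
end

section
/- Let ν be a Jacobi measure with parameters 0 < l < 1 and β > 1, let d > 0, and define H(τ) := d^{-1}∫_l^1 t²/((Re τ + t)² + (Im τ)²) dν(t) and F(τ) := −τ + d^{-1}∫_l^1 t τ/(τ + t) dν(t). Then for every τ ∈ ℂ with Re τ ≤ −1 and τ ≠ −1 one has H(τ) ≤ d_+/d, and Im F(τ) = −Im τ·(1 − H(τ)); consequently, if d > d_+, then for all such τ, |Im F(τ)| ≥ (1 − d_+/d)·|Im τ|, so Im F(τ) ≠ 0 whenever Im τ ≠ 0. -/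
open MeasureTheory Set
open scoped ENNReal NNReal

set_option maxHeartbeats 1000000 in
/-- for `Re τ ≤ −1`, `τ ≠ −1`, one has `H(τ) ≤ d₊/d` and
`Im F(τ) = −Im τ · (1 − H(τ))`; hence if `d > d₊` then
`|Im F(τ)| ≥ (1 − d₊/d)|Im τ|`, so `Im F(τ) ≠ 0` when `Im τ ≠ 0`. -/
theorem no_solution_outside_spectrum
    (ν : Measure ℝ) (l β : ℝ) (f : ℝ → ℝ) (Z : ℝ)
    (hν : IsJacobi ν l β f Z) (hβ : 1 < β)
    (d : ℝ) (hd : 0 < d)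
    (dplus : ℝ) (hdplus : dplus = ∫ t, t ^ 2 / (1 - t) ^ 2 ∂ν)
    (H : ℂ → ℝ) (F : ℂ → ℂ)
    (hH : ∀ τ : ℂ, H τ = d⁻¹ * ∫ t, t ^ 2 / ((τ.re + t) ^ 2 + τ.im ^ 2) ∂ν)
    (hF : ∀ τ : ℂ, F τ = -τ + (d : ℂ)⁻¹ * ∫ t, (t : ℂ) * τ / (τ + t) ∂ν) :
    ∀ τ : ℂ, τ.re ≤ -1 → τ ≠ -1 →
      (H τ ≤ dplus / d ∧ (F τ).im = -τ.im * (1 - H τ)) ∧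
      (dplus < d →
        (1 - dplus / d) * |τ.im| ≤ |(F τ).im| ∧ (τ.im ≠ 0 → (F τ).im ≠ 0)) := by
  obtain ⟨hl, hl1, hf1, hfpos, hZdef, hνeq, hprob⟩ := hν
  have hIccM : MeasurableSet (Icc l (1:ℝ)) := measurableSet_Icc
  set g0 : ℝ → ℝ := fun t => Z⁻¹ * (1 - t) ^ β * f t with hg0
  have hcont : ContinuousOn g0 (Icc l 1) := by
    apply ContinuousOn.mul _ hf1.continuousOn
    apply ContinuousOn.mul continuousOn_const
    exact ((continuous_const.sub continuous_id).continuousOn).rpow_const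
      (fun x _ => Or.inr (by linarith))
  have hdm : AEMeasurable (jacobiDensity l β Z f) volume := by
    rw [jacobiDensity]
    exact (aemeasurable_indicator_iff hIccM).2 (hcont.aemeasurable hIccM)
  have hZnn : 0 ≤ Z := by
    rw [hZdef]
    exact setIntegral_nonneg hIccM fun t ht =>
      mul_nonneg (Real.rpow_nonneg (by linarith [ht.2]) _) (hfpos t ht).le
  have hdnn : ∀ t, 0 ≤ jacobiDensity l β Z f t := by
    intro t
    rw [jacobiDensity]
    exact indicator_nonneg (fun t ht =>
      mul_nonneg (mul_nonneg (inv_nonneg.2 hZnn) (Real.rpow_nonneg (by linarith [ht.2]) _))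
        (hfpos t ht).le) t
  -- support
  have hsupp : ∀ᵐ t ∂ν, t ∈ Icc l 1 := by
    rw [ae_iff]
    have hset : {a : ℝ | ¬ a ∈ Icc l 1} = (Icc l (1:ℝ))ᶜ := rfl
    have hz : ∫⁻ t in (Icc l (1:ℝ))ᶜ, ENNReal.ofReal (jacobiDensity l β Z f t) ∂volume = 0 := by
      rw [setLIntegral_congr_fun (g := fun _ => (0:ℝ≥0∞)) hIccM.compl
        (fun x hx => by
          simp [jacobiDensity, Set.indicator_of_notMem hx]), lintegral_zero]
    rw [hset, hνeq, withDensity_apply _ hIccM.compl, hz]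
  have hac : ν ≪ volume := hνeq ▸ withDensity_absolutelyContinuous _ _
  have hne1 : ∀ᵐ t ∂ν, t ≠ 1 := by
    have h0 : ν {(1:ℝ)} = 0 := hac (measure_singleton 1)
    rw [ae_iff]
    convert h0 using 2
    ext x; simp
  obtain ⟨M, hM⟩ := isCompact_Icc.exists_bound_of_continuousOn hf1.continuousOn
  have hM0 : 0 ≤ M := le_trans (norm_nonneg (f l)) (hM l ⟨le_refl l, hl1.le⟩)
  -- integrability of t^2/(1-t)^2 wrt ν
  have hplusInt : Integrable (fun t => t ^ 2 / (1 - t) ^ 2) ν := by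
    rw [hνeq]
    have hρ : AEMeasurable (fun t => (jacobiDensity l β Z f t).toNNReal) volume :=
      measurable_real_toNNReal.comp_aemeasurable hdm
    have hrwd : (fun t => ENNReal.ofReal (jacobiDensity l β Z f t)) =
        fun t => ((jacobiDensity l β Z f t).toNNReal : ℝ≥0∞) := rfl
    rw [hrwd, integrable_withDensity_iff_integrable_smul₀ hρ]
    have heq : ∀ x : ℝ, (jacobiDensity l β Z f x).toNNReal • (x ^ 2 / (1 - x) ^ 2) =
        Set.indicator (Icc l 1) (fun t => g0 t * (t ^ 2 / (1 - t) ^ 2)) x := by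
      intro x
      rw [NNReal.smul_def, Real.coe_toNNReal _ (hdnn x), jacobiDensity]
      by_cases hx : x ∈ Icc l 1 <;> simp [hx, hg0]
    simp only [heq]
    rw [integrable_indicator_iff hIccM]
    -- bound function integrable
    have hbInt : IntegrableOn (fun t => (1 - t) ^ (β - 2)) (Icc l 1) volume := by
      have h1 : IntervalIntegrable (fun x : ℝ => x ^ (β - 2)) volume 0 (1 - l) :=
        intervalIntegral.intervalIntegrable_rpow' (by linarith)
      have h2 := (h1.comp_sub_left 1).symm
      norm_num at h2
      rw [intervalIntegrable_iff, uIoc_of_le hl1.le] at h2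
      rwa [integrableOn_Icc_iff_integrableOn_Ioc]
    apply Integrable.mono' (hbInt.const_mul (|Z⁻¹| * M))
    · exact (hcont.aestronglyMeasurable hIccM).mul
        ((by fun_prop : Measurable fun t : ℝ => t ^ 2 / (1 - t) ^ 2).aestronglyMeasurable)
    · rw [ae_restrict_iff' hIccM]
      refine Filter.Eventually.of_forall fun t ht => ?_
      rcases eq_or_lt_of_le ht.2 with h1 | h1
      · rw [← h1]
        simp only [sub_self]
        norm_num
        positivity
      · have h1t : (0:ℝ) < 1 - t := by linarith
        have hrwb : (1 - t) ^ (β - 2) = (1 - t) ^ β / (1 - t) ^ 2 := by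
          rw [Real.rpow_sub h1t, Real.rpow_two]
        have hft : |f t| ≤ M := hM t ht
        have h2 : (0:ℝ) < (1 - t) ^ 2 := by positivity
        rw [Real.norm_eq_abs, hg0]
        calc |Z⁻¹ * (1 - t) ^ β * f t * (t ^ 2 / (1 - t) ^ 2)|
            = |Z⁻¹| * (1 - t) ^ β * |f t| * (t ^ 2 / (1 - t) ^ 2) := by
              rw [abs_mul, abs_mul, abs_mul,
                abs_of_nonneg (Real.rpow_nonneg h1t.le _),
                abs_of_nonneg (div_nonneg (sq_nonneg t) h2.le)]
          _ ≤ |Z⁻¹| * (1 - t) ^ β * M * (1 / (1 - t) ^ 2) := by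
              gcongr
              nlinarith [ht.1, ht.2, hl]
          _ = |Z⁻¹| * M * ((1 - t) ^ β / (1 - t) ^ 2) := by ring
          _ = |Z⁻¹| * M * (1 - t) ^ (β - 2) := by rw [hrwb]
  -- main part
  intro τ hre hne
  have hc : 0 < (τ.re + 1) ^ 2 + τ.im ^ 2 := by
    have hor : τ.re ≠ -1 ∨ τ.im ≠ 0 := by
      by_contra h
      push_neg at h
      exact hne (Complex.ext (by simp [h.1]) (by simp [h.2]))
    rcases hor with h | h
    · have h1 : τ.re + 1 ≠ 0 := fun h0 => h (by linarith)
      nlinarith [mul_self_pos.mpr h1, sq_nonneg τ.im]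
    · nlinarith [mul_self_pos.mpr h, sq_nonneg (τ.re + 1)]
  have hD : ∀ t ∈ Icc l (1:ℝ), (τ.re + 1) ^ 2 + τ.im ^ 2 ≤ (τ.re + t) ^ 2 + τ.im ^ 2 := by
    intro t ht
    nlinarith [mul_nonneg (by linarith [ht.2] : (0:ℝ) ≤ 1 - t)
      (by linarith [ht.2] : (0:ℝ) ≤ -(2 * τ.re + t + 1))]
  have hDpos : ∀ t ∈ Icc l (1:ℝ), 0 < (τ.re + t) ^ 2 + τ.im ^ 2 :=
    fun t ht => lt_of_lt_of_le hc (hD t ht)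
  -- integrability of H integrand
  have hg1Int : Integrable (fun t => t ^ 2 / ((τ.re + t) ^ 2 + τ.im ^ 2)) ν := by
    apply Integrable.mono' (integrable_const (((τ.re + 1) ^ 2 + τ.im ^ 2)⁻¹))
    · exact (by fun_prop :
        Measurable fun t : ℝ => t ^ 2 / ((τ.re + t) ^ 2 + τ.im ^ 2)).aestronglyMeasurable
    · filter_upwards [hsupp] with t ht
      rw [Real.norm_eq_abs, abs_of_nonneg (div_nonneg (sq_nonneg t) (hDpos t ht).le),
        ← one_div]
      rw [div_le_div_iff₀ (hDpos t ht) hc]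
      have ht2 : t ^ 2 ≤ 1 := by nlinarith [ht.1, ht.2, hl]
      nlinarith [mul_nonneg (sub_nonneg.2 ht2) hc.le, hD t ht]
  -- comparison
  have hmono : ∀ᵐ t ∂ν, t ^ 2 / ((τ.re + t) ^ 2 + τ.im ^ 2) ≤ t ^ 2 / (1 - t) ^ 2 := by
    filter_upwards [hsupp, hne1] with t ht ht1
    have h1t : (0:ℝ) < 1 - t := lt_of_le_of_ne (by linarith [ht.2]) (by
      intro h; exact ht1 (by linarith))
    have hle : (1 - t) ^ 2 ≤ (τ.re + t) ^ 2 + τ.im ^ 2 := by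
      nlinarith [sq_nonneg τ.im, ht.2]
    exact div_le_div_of_nonneg_left (sq_nonneg t) (by positivity) hle
  have hIle : (∫ t, t ^ 2 / ((τ.re + t) ^ 2 + τ.im ^ 2) ∂ν) ≤ dplus := by
    rw [hdplus]
    exact integral_mono_ae hg1Int hplusInt hmono
  have hHle : H τ ≤ dplus / d := by
    rw [hH, div_eq_inv_mul]
    exact mul_le_mul_of_nonneg_left hIle (inv_nonneg.2 hd.le)
  -- Im F
  have hg2Int : Integrable (fun t : ℝ => (t : ℂ) * τ / (τ + t)) ν := by
    apply Integrable.mono'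
      (integrable_const (‖τ‖ / Real.sqrt ((τ.re + 1) ^ 2 + τ.im ^ 2)))
    · exact (by fun_prop : Measurable fun t : ℝ => (t : ℂ) * τ / (τ + t)).aestronglyMeasurable
    · filter_upwards [hsupp] with t ht
      have hsq : Real.sqrt ((τ.re + 1) ^ 2 + τ.im ^ 2) ≤ ‖τ + t‖ := by
        rw [Complex.norm_def, Complex.normSq_apply]
        apply Real.sqrt_le_sqrt
        simpa [← sq] using hD t ht
      have hsqpos : 0 < Real.sqrt ((τ.re + 1) ^ 2 + τ.im ^ 2) := Real.sqrt_pos.2 hc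
      rw [norm_div, norm_mul, Complex.norm_real]
      calc ‖t‖ * ‖τ‖ / ‖τ + t‖
          ≤ 1 * ‖τ‖ / Real.sqrt ((τ.re + 1) ^ 2 + τ.im ^ 2) := by
            apply div_le_div₀ (by positivity) _ hsqpos hsq
            have : ‖t‖ ≤ 1 := by
              rw [Real.norm_eq_abs, abs_le]; constructor <;> [linarith [ht.1, hl]; exact ht.2]
            nlinarith [norm_nonneg τ]
        _ = ‖τ‖ / Real.sqrt ((τ.re + 1) ^ 2 + τ.im ^ 2) := by rw [one_mul]
  have hImpt : ∀ᵐ t : ℝ ∂ν, ((t : ℂ) * τ / (τ + t)).im =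
      τ.im * (t ^ 2 / ((τ.re + t) ^ 2 + τ.im ^ 2)) := by
    filter_upwards [hsupp] with t ht
    have hDne : (τ.re + t) ^ 2 + τ.im ^ 2 ≠ 0 := (hDpos t ht).ne'
    rw [Complex.div_im]
    simp only [Complex.mul_im, Complex.mul_re, Complex.ofReal_re, Complex.ofReal_im,
      Complex.add_re, Complex.add_im, Complex.normSq_apply, zero_mul, mul_zero, add_zero,
      sub_zero, zero_add]
    rw [show (τ.re + t) * (τ.re + t) + τ.im * τ.im = (τ.re + t) ^ 2 + τ.im ^ 2 by ring,
      div_sub_div_same, ← mul_div_assoc]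
    congr 1
    ring
  have hImF : (F τ).im = -τ.im * (1 - H τ) := by
    have h1 : (∫ t : ℝ, (t : ℂ) * τ / (τ + t) ∂ν).im =
        τ.im * ∫ t, t ^ 2 / ((τ.re + t) ^ 2 + τ.im ^ 2) ∂ν := by
      rw [← RCLike.im_to_complex, ← integral_im hg2Int]
      simp only [RCLike.im_to_complex]
      rw [integral_congr_ae hImpt, integral_const_mul]
    rw [hF, hH]
    have h2 : ((d : ℂ)⁻¹ * ∫ t : ℝ, (t : ℂ) * τ / (τ + t) ∂ν).im =
        d⁻¹ * (∫ t : ℝ, (t : ℂ) * τ / (τ + t) ∂ν).im := by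
      rw [← Complex.ofReal_inv, Complex.im_ofReal_mul]
    rw [Complex.add_im, Complex.neg_im, h2, h1]
    ring
  refine ⟨⟨hHle, hImF⟩, fun hlt => ?_⟩
  have hH0 : 0 ≤ H τ := by
    rw [hH]
    exact mul_nonneg (inv_nonneg.2 hd.le)
      (integral_nonneg fun t => div_nonneg (sq_nonneg t) (by positivity))
  have hdd : dplus / d < 1 := (div_lt_one hd).2 hlt
  have habs : |(F τ).im| = |τ.im| * (1 - H τ) := by
    rw [hImF, abs_mul, abs_neg, abs_of_nonneg (by linarith : (0:ℝ) ≤ 1 - H τ)]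
  constructor
  · rw [habs]
    nlinarith [abs_nonneg τ.im]
  · intro hb
    rw [hImF]
    exact mul_ne_zero (neg_ne_zero.2 hb) (by nlinarith)
end

section
/- Let ν be a Jacobi measure with parameters 0 < l < 1 and β > 1, let d > 0, let z = E + iη with η > 0, and let m ∈ ℂ with Im m > 0 satisfy the self-consistent equation m = (−z + d^{-1}∫_l^1 t/(1 + t m) dν(t))^{-1}. Then η·|m|²/Im m + d^{-1}∫_l^1 t²|m|²/|t m + 1|² dν(t) = 1; in particular, setting R₂ := d^{-1}∫_l^1 t²|m|²/|t m + 1|² dν(t), one has 0 ≤ R₂ < 1. -/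
open MeasureTheory Set

/-- the imaginary-part identity for a solution of the self-consistent equation:
`η|m|²/Im m + d⁻¹ ∫ t²|m|²/|tm+1|² dν = 1`, and hence `0 ≤ R₂ < 1`. -/
theorem self_consistent_imaginary_part_identity
    (ν : Measure ℝ) (l β : ℝ) (f : ℝ → ℝ) (Z : ℝ)
    (hν : IsJacobi ν l β f Z) (hβ : 1 < β)
    (d : ℝ) (hd : 0 < d)
    (E η : ℝ) (hη : 0 < η) (z : ℂ) (hz : z = Complex.mk E η)
    (m : ℂ) (hm : 0 < m.im)
    (hself : m = (-z + (d : ℂ)⁻¹ * ∫ t, (t : ℂ) / (1 + t * m) ∂ν)⁻¹)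
    (R₂ : ℝ)
    (hR₂ : R₂ = d⁻¹ * ∫ t, t ^ 2 * ‖m‖ ^ 2 / ‖(t : ℂ) * m + 1‖ ^ 2 ∂ν) :
    η * ‖m‖ ^ 2 / m.im + R₂ = 1 ∧ 0 ≤ R₂ ∧ R₂ < 1 := by
  haveI := hν.prob
  have hl := hν.l_pos
  -- support of ν
  have hsupp : ν (Set.Icc l 1)ᶜ = 0 := by
    rw [hν.eq_density, withDensity_apply _ measurableSet_Icc.compl]
    have : ∀ x ∈ (Set.Icc l 1)ᶜ,
        ENNReal.ofReal (jacobiDensity l β Z f x) = 0 := by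
      intro x hx
      simp [jacobiDensity, Set.indicator_of_notMem hx]
    calc ∫⁻ x in (Set.Icc l 1)ᶜ, ENNReal.ofReal (jacobiDensity l β Z f x)
        = ∫⁻ _x in (Set.Icc l 1)ᶜ, 0 := setLIntegral_congr_fun measurableSet_Icc.compl
            this
      _ = 0 := by simp
  have hae : ∀ᵐ t ∂ν, t ∈ Set.Icc l 1 := mem_ae_iff.mpr hsupp
  -- pointwise identity for the imaginary part
  have hpoint : ∀ t : ℝ, ((t : ℂ) / (1 + t * m)).im
      = -m.im * (t ^ 2 / ‖(t : ℂ) * m + 1‖ ^ 2) := by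
    intro t
    rw [Complex.sq_norm]
    simp only [Complex.div_im, Complex.normSq_apply, Complex.add_re, Complex.add_im,
      Complex.one_re, Complex.one_im, Complex.mul_re, Complex.mul_im,
      Complex.ofReal_re, Complex.ofReal_im]
    ring
  -- integrability of g
  set g : ℝ → ℂ := fun t => (t : ℂ) / (1 + t * m) with hg
  have hgmeas : Measurable g := by
    apply Complex.measurable_ofReal.div
    exact measurable_const.add (Complex.measurable_ofReal.mul_const m)
  have hgint : Integrable g ν := by
    refine Integrable.mono' (integrable_const ((l * m.im)⁻¹)) hgmeas.aestronglyMeasurable ?_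
    filter_upwards [hae] with t ht
    have h1 : l * m.im ≤ ‖1 + (t : ℂ) * m‖ := by
      have him : (1 + (t : ℂ) * m).im = t * m.im := by simp
      calc l * m.im ≤ t * m.im := by nlinarith [ht.1, hm]
        _ ≤ |(1 + (t : ℂ) * m).im| := by rw [him]; exact le_abs_self _
        _ ≤ ‖1 + (t : ℂ) * m‖ := Complex.abs_im_le_norm _
    have hlm : 0 < l * m.im := mul_pos hl hm
    have habs : ‖(t : ℂ)‖ ≤ 1 := by
      rw [Complex.norm_real, Real.norm_eq_abs, abs_le]
      constructor <;> nlinarith [ht.1, ht.2]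
    rw [hg]
    simp only [norm_div]
    rw [div_le_iff₀ (lt_of_lt_of_le hlm h1)]
    calc ‖(t : ℂ)‖ ≤ 1 := habs
      _ ≤ (l * m.im)⁻¹ * (l * m.im) := by rw [inv_mul_cancel₀ hlm.ne']
      _ ≤ (l * m.im)⁻¹ * ‖1 + (t : ℂ) * m‖ := by
          exact mul_le_mul_of_nonneg_left h1 (inv_nonneg.mpr hlm.le)
  -- the real integral
  set I : ℝ := ∫ t, t ^ 2 / ‖(t : ℂ) * m + 1‖ ^ 2 ∂ν with hI
  have hJim : (∫ t, g t ∂ν).im = -m.im * I := by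
    have h1 : ∫ t, (g t).im ∂ν = (∫ t, g t ∂ν).im := integral_im hgint
    rw [← h1, integral_congr_ae (Filter.Eventually.of_forall hpoint), integral_const_mul]
  -- R₂ = d⁻¹ * |m|² * I
  have hR₂' : R₂ = d⁻¹ * (‖m‖ ^ 2 * I) := by
    rw [hR₂, hI]
    congr 1
    rw [← integral_const_mul]
    apply integral_congr_ae
    filter_upwards with t
    ring
  -- the self-consistent equation: take inverses and imaginary parts
  have hinv : m⁻¹ = -z + (d : ℂ)⁻¹ * ∫ t, g t ∂ν := by
    rw [hself, inv_inv]
  have hzim : z.im = η := by rw [hz]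
  have hdinv : ((d : ℂ)⁻¹ * ∫ t, g t ∂ν).im = d⁻¹ * (∫ t, g t ∂ν).im := by
    rw [show ((d:ℂ))⁻¹ = ((d⁻¹ : ℝ) : ℂ) by push_cast; ring]
    simp [Complex.mul_im]
  have hstar : -m.im / Complex.normSq m = -η + d⁻¹ * (-m.im * I) := by
    have := congrArg Complex.im hinv
    rwa [Complex.inv_im, Complex.add_im, Complex.neg_im, hzim, hdinv, hJim] at this
  have hmne : m ≠ 0 := fun h => by simp [h] at hm
  have hA : Complex.normSq m = ‖m‖ ^ 2 := (Complex.sq_norm m).symm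
  have hApos : 0 < ‖m‖ ^ 2 := pow_pos (norm_pos_iff.mpr hmne) 2
  rw [hA] at hstar
  have him := hm.ne'
  have key : η * ‖m‖ ^ 2 / m.im + R₂ = 1 := by
    rw [hR₂']
    field_simp at hstar ⊢
    nlinarith [hstar, hApos, hm]
  refine ⟨key, ?_, ?_⟩
  · rw [hR₂]
    apply mul_nonneg (by positivity)
    apply integral_nonneg
    intro t
    positivity
  · have hpos : 0 < η * ‖m‖ ^ 2 / m.im := div_pos (mul_pos hη hApos) hm
    linarith [key]
end

section
/- Let N, M be positive integers, let σ_1, …, σ_M ∈ (0, 1], let z = E + iη with η > 0, and let m̂ ∈ ℂ with Im m̂ > 0 satisfy m̂ = (−z + (1/N)∑_{α=1}^M σ_α/(σ_α m̂ + 1))^{-1}. Then (1/N)∑_{α=1}^M σ_α²|m̂|²/|σ_α m̂ + 1|² = 1 − η·|m̂|²/Im m̂, and in particular (1/N)∑_{α=1}^M σ_α²|m̂|²/|σ_α m̂ + 1|² < 1. -/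
/-- the finite (empirical) self-consistent equation implies
`(1/N)∑ σ_α²|m̂|²/|σ_α m̂+1|² = 1 − η|m̂|²/Im m̂ < 1`. -/
theorem empirical_self_consistent_imaginary_part_identity
    (N M : ℕ) (hN : 0 < N) (hM : 0 < M)
    (σ : Fin M → ℝ) (hσ : ∀ α, σ α ∈ Set.Ioc (0 : ℝ) 1)
    (E η : ℝ) (hη : 0 < η) (z : ℂ) (hz : z = Complex.mk E η)
    (mhat : ℂ) (hmhat : 0 < mhat.im)
    (hself : mhat =
      (-z + (N : ℂ)⁻¹ * ∑ α : Fin M, (σ α : ℂ) / (σ α * mhat + 1))⁻¹) :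
    (N : ℝ)⁻¹ * ∑ α : Fin M,
        (σ α) ^ 2 * ‖mhat‖ ^ 2 / ‖(σ α * mhat + 1 : ℂ)‖ ^ 2 =
      1 - η * ‖mhat‖ ^ 2 / mhat.im ∧
    (N : ℝ)⁻¹ * ∑ α : Fin M,
        (σ α) ^ 2 * ‖mhat‖ ^ 2 / ‖(σ α * mhat + 1 : ℂ)‖ ^ 2 < 1 := by
  have hm0 : mhat ≠ 0 := by
    intro h; rw [h] at hmhat; simp at hmhat
  have hmsq : 0 < Complex.normSq mhat := Complex.normSq_pos.mpr hm0
  have hNR : (0:ℝ) < (N:ℝ) := by exact_mod_cast hN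
  -- denominators nonzero
  have hdn : ∀ α : Fin M, 0 < Complex.normSq ((σ α : ℂ) * mhat + 1) := by
    intro α
    apply Complex.normSq_pos.mpr
    intro h
    have h2 : ((σ α : ℂ) * mhat + 1).im = 0 := by rw [h]; simp
    simp [Complex.add_im, Complex.mul_im] at h2
    have h3 := (hσ α).1
    rcases h2 with h2 | h2 <;> linarith
  set w : ℂ := -z + (N : ℂ)⁻¹ * ∑ α : Fin M, (σ α : ℂ) / (σ α * mhat + 1) with hw
  have hw0 : w ≠ 0 := by
    intro h
    rw [h, inv_zero] at hself
    exact hm0 hself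
  have hinv : mhat⁻¹ = w := by rw [hself, inv_inv]
  have him := congrArg Complex.im hinv
  rw [Complex.inv_im, hw] at him
  have hcast : (N : ℂ)⁻¹ = Complex.ofReal ((N:ℝ)⁻¹) := by
    rw [Complex.ofReal_inv, Complex.ofReal_natCast]
  rw [hcast, Complex.add_im, Complex.im_ofReal_mul, Complex.neg_im, hz] at him
  have hsum : (∑ α : Fin M, (σ α : ℂ) / (σ α * mhat + 1)).im
      = ∑ α : Fin M, (-((σ α)^2 * mhat.im) / Complex.normSq ((σ α : ℂ) * mhat + 1)) := by
    rw [Complex.im_sum]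
    refine Finset.sum_congr rfl fun α _ => ?_
    rw [Complex.div_im]
    simp [Complex.add_im, Complex.add_re, Complex.mul_im, Complex.mul_re]
    ring
  rw [hsum] at him
  -- him : -mhat.im / normSq mhat = -η + N⁻¹ * ∑ ...
  set A : ℝ := ∑ α : Fin M, (σ α)^2 / Complex.normSq ((σ α : ℂ) * mhat + 1) with hA
  have hsum2 : ∑ α : Fin M, (-((σ α)^2 * mhat.im) / Complex.normSq ((σ α : ℂ) * mhat + 1))
      = -mhat.im * A := by
    rw [hA, Finset.mul_sum]
    refine Finset.sum_congr rfl fun α _ => ?_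
    ring
  rw [hsum2] at him
  have hLHS : (N : ℝ)⁻¹ * ∑ α : Fin M,
        (σ α) ^ 2 * ‖mhat‖ ^ 2 / ‖((σ α : ℂ) * mhat + 1)‖ ^ 2
      = (N:ℝ)⁻¹ * (Complex.normSq mhat * A) := by
    congr 1
    rw [hA, Finset.mul_sum]
    refine Finset.sum_congr rfl fun α _ => ?_
    rw [Complex.sq_norm, Complex.sq_norm]
    ring
  have habs : ‖mhat‖ ^ 2 = Complex.normSq mhat := Complex.sq_norm mhat
  have key : (N:ℝ)⁻¹ * (Complex.normSq mhat * A) = 1 - η * Complex.normSq mhat / mhat.im := by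
    have him' : -mhat.im / Complex.normSq mhat = -η + (N:ℝ)⁻¹ * (-mhat.im * A) := him
    field_simp at him' ⊢
    nlinarith [him', hmsq, hmhat, hNR]
  constructor
  · rw [hLHS, habs, key]
  · rw [hLHS, key]
    have : 0 < η * Complex.normSq mhat / mhat.im := by positivity
    linarith
end

section
/- Let ν be a Jacobi measure with parameters 0 < l < 1 and β > 1, let d > d_+, and set L_+ = 1 + τ_+. Let z lie in the upper half-plane and let m = m(z) ∈ ℂ with Im m > 0 satisfy the self-consistent equation m = (−z + d^{-1}∫_l^1 t/(1 + t m) dν(t))^{-1}. Define T(z) := −d^{-1}∫_l^1 t² m/((1 + t m)(1 − t)) dν(t). Then |T(z)| ≤ √(d_+/d) < 1, and 1/m + 1 = (L_+ − z)/(1 − T(z)); consequently |1/m + 1| ≤ (√d/(√d − √d_+))·|L_+ − z|. -/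
open MeasureTheory Set
open scoped ENNReal NNReal

section Aux

variable {ν : Measure ℝ} {l β : ℝ} {f : ℝ → ℝ} {Z : ℝ}

lemma jacobi_density_aemeas (hν : IsJacobi ν l β f Z) (hβ : 1 < β) :
    AEMeasurable (fun t => ENNReal.ofReal (jacobiDensity l β Z f t)) volume := by
  have hrc : Continuous fun t : ℝ => (1 - t) ^ β := by
    rw [continuous_iff_continuousAt]
    intro x
    exact (Real.continuousAt_rpow_const (1 - x) β (Or.inr (by linarith))).comp
      ((continuous_const.sub continuous_id).continuousAt)
  have hcont : ContinuousOn (fun t => Z⁻¹ * (1 - t) ^ β * f t) (Set.Icc l 1) :=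
    ((continuous_const.mul hrc).continuousOn).mul hν.f_C1.continuousOn
  have : AEMeasurable (jacobiDensity l β Z f) volume := by
    rw [jacobiDensity, aemeasurable_indicator_iff measurableSet_Icc]
    exact hcont.aemeasurable measurableSet_Icc
  exact this.ennreal_ofReal

lemma jacobi_ae_mem (hν : IsJacobi ν l β f Z) : ∀ᵐ t ∂ν, l ≤ t ∧ t < 1 := by
  have h1 : ν (Set.Icc l 1)ᶜ = 0 := by
    rw [hν.eq_density, withDensity_apply _ measurableSet_Icc.compl]
    have : ∫⁻ t in (Set.Icc l 1)ᶜ, ENNReal.ofReal (jacobiDensity l β Z f t) ∂volume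
        = ∫⁻ _ in (Set.Icc l 1)ᶜ, 0 ∂volume := by
      apply setLIntegral_congr_fun measurableSet_Icc.compl
      intro t ht
      simp [jacobiDensity, Set.indicator_of_notMem (Set.notMem_of_mem_compl ht)]
    simp [this]
  have h2 : ν {(1:ℝ)} = 0 := by
    rw [hν.eq_density]
    exact withDensity_absolutelyContinuous volume _ (by simp)
  rw [ae_iff]
  refine measure_mono_null ?_ (measure_union_null h1 h2)
  intro t ht
  simp only [Set.mem_setOf_eq, not_and_or, not_le, not_lt] at ht
  rcases ht with h | h
  · exact Or.inl (fun hmem => absurd hmem.1 (not_le.2 h))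
  · by_cases hmem : t ∈ Set.Icc l 1
    · exact Or.inr (le_antisymm hmem.2 h)
    · exact Or.inl hmem

/-- Master integrability lemma: anything dominated by `C/(1-t)^2` on `[l,1)`
is `ν`-integrable when `β > 1`. -/
lemma jacobi_integrable_aux (hν : IsJacobi ν l β f Z) (hβ : 1 < β)
    {E : Type*} [NormedAddCommGroup E] {h : ℝ → E}
    (hmeas : AEStronglyMeasurable h volume) {C : ℝ}
    (hbound : ∀ t, l ≤ t → t < 1 → ‖h t‖ ≤ C / (1 - t) ^ 2) :
    Integrable h ν := by
  have hl0 := hν.l_pos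
  have hl1 := hν.l_lt_one
  have hC : 0 ≤ C := by
    have h1 := hbound l le_rfl hl1
    have h2 : (0:ℝ) < (1 - l) ^ 2 := pow_pos (by linarith) 2
    have h4 : 0 ≤ C / (1 - l) ^ 2 := (norm_nonneg _).trans h1
    rcases div_nonneg_iff.mp h4 with h5 | h5
    · exact h5.1
    · linarith [h5.2]
  -- bound on f
  obtain ⟨Fm, hFm⟩ := (isCompact_Icc (a := l) (b := 1)).exists_bound_of_continuousOn
    hν.f_C1.continuousOn
  have hFm0 : 0 ≤ Fm := le_trans (norm_nonneg _) (hFm l ⟨le_rfl, hl1.le⟩)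
  have hZinv : 0 ≤ Z⁻¹ := by
    rw [hν.Z_def]
    apply inv_nonneg.2
    apply setIntegral_nonneg measurableSet_Icc
    intro t ht
    have h1t : 0 ≤ 1 - t := by linarith [ht.2]
    exact mul_nonneg (Real.rpow_nonneg h1t β) (hν.f_pos t ht).le
  set K : ℝ := Z⁻¹ * Fm * C with hK
  have hK0 : 0 ≤ K := by positivity
  refine ⟨hmeas.mono_ac (hν.eq_density ▸ withDensity_absolutelyContinuous volume _), ?_⟩
  have key : ∫⁻ a, (‖h a‖₊ : ℝ≥0∞) ∂ν
      = ∫⁻ a, ENNReal.ofReal (jacobiDensity l β Z f a) * (‖h a‖₊ : ℝ≥0∞) ∂volume := by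
    rw [hν.eq_density]
    exact lintegral_withDensity_eq_lintegral_mul₀ (jacobi_density_aemeas hν hβ)
      hmeas.enorm
  rw [HasFiniteIntegral]
  simp only [enorm_eq_nnnorm]
  rw [key]
  have hptwise : ∀ a, ENNReal.ofReal (jacobiDensity l β Z f a) * (‖h a‖₊ : ℝ≥0∞)
      ≤ (Set.Ico l 1).indicator (fun a => ENNReal.ofReal (K * (1 - a) ^ (β - 2))) a := by
    intro a
    by_cases ha : a ∈ Set.Ico l 1
    · rw [Set.indicator_of_mem ha]
      obtain ⟨hal, ha1⟩ := ha
      have h1a : (0:ℝ) < 1 - a := by linarith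
      have hfa : f a ≤ Fm := le_trans (le_abs_self _) (hFm a ⟨hal, ha1.le⟩)
      have hmem : a ∈ Set.Icc l 1 := ⟨hal, ha1.le⟩
      have hga : jacobiDensity l β Z f a = Z⁻¹ * (1 - a) ^ β * f a := by
        rw [jacobiDensity, Set.indicator_of_mem hmem]
      have hrp : 0 ≤ (1 - a) ^ β := Real.rpow_nonneg h1a.le β
      have hfa0 : 0 ≤ f a := (hν.f_pos a hmem).le
      rw [hga, ← enorm_eq_nnnorm, ← ofReal_norm,
        ← ENNReal.ofReal_mul (by positivity)]
      apply ENNReal.ofReal_le_ofReal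
      calc Z⁻¹ * (1 - a) ^ β * f a * ‖h a‖
          ≤ Z⁻¹ * (1 - a) ^ β * Fm * (C / (1 - a) ^ 2) := by
            apply mul_le_mul
            · exact mul_le_mul_of_nonneg_left hfa (by positivity)
            · exact hbound a hal ha1
            · exact norm_nonneg _
            · positivity
        _ = K * ((1 - a) ^ β / (1 - a) ^ (2:ℕ)) := by ring
        _ = K * (1 - a) ^ (β - 2) := by
            rw [← Real.rpow_natCast (1 - a) 2, ← Real.rpow_sub h1a]
            norm_num
    · rw [Set.indicator_of_notMem ha]
      have hzero : jacobiDensity l β Z f a = 0 := by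
        by_cases hIcc : a ∈ Set.Icc l 1
        · have ha1 : a = 1 := by
            simp only [Set.mem_Ico, not_and_or, not_le, not_lt] at ha
            rcases ha with h | h
            · exact absurd hIcc.1 (not_le.2 h)
            · exact le_antisymm hIcc.2 h
          rw [jacobiDensity, Set.indicator_of_mem hIcc, ha1]
          rw [sub_self, Real.zero_rpow (by linarith)]
          ring
        · exact Set.indicator_of_notMem hIcc _
      simp [hzero]
  have hfin : ∫⁻ x in Set.Ioc l 1, (‖(1 - x) ^ (β - 2)‖₊ : ℝ≥0∞) ∂volume < ⊤ := by
    have J0 : IntervalIntegrable (fun x : ℝ => x ^ (β - 2)) volume 0 (1 - l) :=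
      intervalIntegral.intervalIntegrable_rpow' (by linarith)
    have J1 := J0.comp_sub_left 1
    norm_num at J1
    have J2 : IntervalIntegrable (fun x : ℝ => (1 - x) ^ (β - 2)) volume l 1 := J1.symm
    rw [intervalIntegrable_iff, Set.uIoc_of_le hl1.le] at J2
    exact J2.2
  calc ∫⁻ a, ENNReal.ofReal (jacobiDensity l β Z f a) * (‖h a‖₊ : ℝ≥0∞) ∂volume
      ≤ ∫⁻ a, (Set.Ico l 1).indicator
          (fun a => ENNReal.ofReal (K * (1 - a) ^ (β - 2))) a ∂volume :=
        lintegral_mono hptwise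
    _ = ∫⁻ a in Set.Ico l 1, ENNReal.ofReal (K * (1 - a) ^ (β - 2)) ∂volume :=
        lintegral_indicator measurableSet_Ico _
    _ = ∫⁻ a in Set.Ioc l 1, ENNReal.ofReal (K * (1 - a) ^ (β - 2)) ∂volume :=
        setLIntegral_congr Ico_ae_eq_Ioc
    _ ≤ ∫⁻ a in Set.Ioc l 1, ENNReal.ofReal K * (‖(1 - a) ^ (β - 2)‖₊ : ℝ≥0∞) ∂volume := by
        apply lintegral_mono
        intro a
        dsimp only
        rw [ENNReal.ofReal_mul hK0]
        exact mul_le_mul_right (Real.ofReal_le_enorm _) _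
    _ = ENNReal.ofReal K * ∫⁻ a in Set.Ioc l 1, (‖(1 - a) ^ (β - 2)‖₊ : ℝ≥0∞) ∂volume :=
        lintegral_const_mul' _ _ ENNReal.ofReal_ne_top
    _ < ⊤ := ENNReal.mul_lt_top ENNReal.ofReal_lt_top hfin

end Aux

set_option maxHeartbeats 1000000 in
/-- in the supercritical regime `d > d₊`, the quantity
`T(z) = −d⁻¹∫ t² m /((1+tm)(1−t)) dν` satisfies `|T(z)| ≤ √(d₊/d) < 1` and
`1/m + 1 = (L₊ − z)/(1 − T(z))`, whence `|1/m + 1| ≤ (√d/(√d − √d₊))|L₊ − z|`. -/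
theorem approximate_linearity_at_edge
    (ν : Measure ℝ) (l β : ℝ) (f : ℝ → ℝ) (Z : ℝ)
    (hν : IsJacobi ν l β f Z) (hβ : 1 < β)
    (d : ℝ) (hd : 0 < d)
    (dplus τplus Lplus : ℝ)
    (hdplus : dplus = ∫ t, t ^ 2 / (1 - t) ^ 2 ∂ν)
    (hτplus : τplus = d⁻¹ * ∫ t, t / (1 - t) ∂ν)
    (hLplus : Lplus = 1 + τplus)
    (hd_super : dplus < d)
    (z : ℂ) (hz : 0 < z.im)
    (m : ℂ) (hm : 0 < m.im)
    (hself : m = (-z + (d : ℂ)⁻¹ * ∫ t, (t : ℂ) / (1 + t * m) ∂ν)⁻¹)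
    (T : ℂ)
    (hT : T = -((d : ℂ)⁻¹ * ∫ t, (t : ℂ) ^ 2 * m / ((1 + t * m) * (1 - t)) ∂ν)) :
    ‖T‖ ≤ Real.sqrt (dplus / d) ∧ Real.sqrt (dplus / d) < 1 ∧
    1 / m + 1 = ((Lplus : ℂ) - z) / (1 - T) ∧
    ‖1 / m + 1‖ ≤
      Real.sqrt d / (Real.sqrt d - Real.sqrt dplus) * ‖(Lplus : ℂ) - z‖ := by
  classical
  have hν' := hν
  obtain ⟨hl0, hl1, _, _, _, hνeq, hprob⟩ := hν
  haveI : IsProbabilityMeasure ν := hprob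
  have hνac : ν ≪ volume := hνeq ▸ withDensity_absolutelyContinuous volume _
  have hae := jacobi_ae_mem hν'
  -- basic complex facts
  have hm0 : m ≠ 0 := by intro h; rw [h] at hm; simp at hm
  have hnsm : 0 < Complex.normSq m := Complex.normSq_pos.2 hm0
  have hlmim : 0 < l * m.im := mul_pos hl0 hm
  set c0 : ℝ := (l * m.im)⁻¹ with hc0def
  have hc00 : 0 ≤ c0 := by positivity
  have him_eq : ∀ t : ℝ, ((1:ℂ) + t * m).im = t * m.im := by
    intro t; simp [Complex.add_im, Complex.mul_im]
  have hdenlb : ∀ t : ℝ, l ≤ t → l * m.im ≤ ‖1 + t * m‖ := by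
    intro t ht
    calc l * m.im ≤ t * m.im := mul_le_mul_of_nonneg_right ht hm.le
      _ ≤ |((1:ℂ) + t * m).im| := by rw [him_eq]; exact le_abs_self _
      _ ≤ ‖1 + t * m‖ := Complex.abs_im_le_norm _
  have hdenpos : ∀ t : ℝ, l ≤ t → 0 < ‖1 + t * m‖ :=
    fun t ht => lt_of_lt_of_le hlmim (hdenlb t ht)
  have hden0 : ∀ t : ℝ, l ≤ t → (1:ℂ) + t * m ≠ 0 := by
    intro t ht h0
    have := hdenpos t ht
    rw [h0] at this; simp at this
  -- measurability of all integrands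
  have hmes1 : Measurable fun t : ℝ => (t:ℂ) / (1 + t * m) :=
    Complex.measurable_ofReal.div
      (measurable_const.add (Complex.measurable_ofReal.mul_const m))
  have hmes3 : Measurable fun t : ℝ => (t:ℂ) ^ 2 * m / ((1 + t * m) * (1 - t)) :=
    ((Complex.measurable_ofReal.pow_const 2).mul_const m).div
      ((measurable_const.add (Complex.measurable_ofReal.mul_const m)).mul
        (measurable_const.sub Complex.measurable_ofReal))
  have hmes2r : Measurable fun t : ℝ => t / (1 - t) :=
    measurable_id.div (measurable_const.sub measurable_id)
  have hmesq : Measurable fun t : ℝ => t ^ 2 / (1 - t) ^ 2 :=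
    (measurable_id.pow_const 2).div ((measurable_const.sub measurable_id).pow_const 2)
  have hmess1 : Measurable fun t : ℝ => t ^ 2 / Complex.normSq (1 + t * m) :=
    (measurable_id.pow_const 2).div
      (Complex.continuous_normSq.measurable.comp
        (measurable_const.add (Complex.measurable_ofReal.mul_const m)))
  -- helper inequalities on [l,1)
  have habs_t : ∀ t : ℝ, l ≤ t → t < 1 → |t| ≤ 1 := by
    intro t htl ht1; rw [abs_le]; constructor <;> [linarith; linarith]
  have hconst_le : ∀ (c t : ℝ), 0 ≤ c → l ≤ t → t < 1 → c ≤ c / (1 - t) ^ 2 := by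
    intro c t hc htl ht1
    have h2 : (0:ℝ) < (1 - t) ^ 2 := pow_pos (by linarith) 2
    rw [le_div_iff₀ h2]
    exact mul_le_of_le_one_right hc (by nlinarith)
  have hdiv_le : ∀ (c t : ℝ), 0 ≤ c → l ≤ t → t < 1 → c / (1 - t) ≤ c / (1 - t) ^ 2 := by
    intro c t hc htl ht1
    exact div_le_div_of_nonneg_left hc (pow_pos (by linarith) 2) (by nlinarith)
  -- norms of the complex integrands
  have hnorm1 : ∀ t : ℝ, ‖(t:ℂ) / (1 + t * m)‖ = |t| / ‖1 + t * m‖ := by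
    intro t; rw [norm_div, Complex.norm_real, Real.norm_eq_abs]
  have hcast1t : ∀ t : ℝ, (1:ℂ) - (t:ℂ) = ((1 - t : ℝ) : ℂ) := by
    intro t; push_cast; ring
  have hnorm3 : ∀ t : ℝ, ‖(t:ℂ) ^ 2 * m / ((1 + t * m) * (1 - t))‖
      = t ^ 2 * ‖m‖ / (‖1 + t * m‖ * |1 - t|) := by
    intro t
    rw [norm_div, norm_mul, norm_mul, norm_pow, Complex.norm_real, Real.norm_eq_abs,
      hcast1t t, Complex.norm_real, Real.norm_eq_abs, sq_abs]
  -- integrability of all integrands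
  have hint_F1 : Integrable (fun t : ℝ => (t:ℂ) / (1 + t * m)) ν := by
    apply jacobi_integrable_aux hν' hβ hmes1.aestronglyMeasurable (C := c0)
    intro t htl ht1
    rw [hnorm1]
    calc |t| / ‖1 + t * m‖ ≤ 1 / (l * m.im) :=
          div_le_div₀ one_pos.le (habs_t t htl ht1) hlmim (hdenlb t htl)
      _ = c0 := one_div _
      _ ≤ c0 / (1 - t) ^ 2 := hconst_le c0 t hc00 htl ht1
  have hint_F2r : Integrable (fun t : ℝ => t / (1 - t)) ν := by
    apply jacobi_integrable_aux hν' hβ hmes2r.aestronglyMeasurable (C := 1)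
    intro t htl ht1
    have h1t : (0:ℝ) < 1 - t := by linarith
    have : ‖t / (1 - t)‖ = |t| / (1 - t) := by
      rw [Real.norm_eq_abs, abs_div, abs_of_pos h1t]
    rw [this]
    calc |t| / (1 - t) ≤ 1 / (1 - t) :=
          div_le_div₀ one_pos.le (habs_t t htl ht1) h1t le_rfl
      _ ≤ 1 / (1 - t) ^ 2 := hdiv_le 1 t one_pos.le htl ht1
  have hint_F2c : Integrable (fun t : ℝ => (t:ℂ) / (1 - t)) ν := by
    have h := hint_F2r.ofReal (𝕜 := ℂ)
    apply h.congr
    filter_upwards with t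
    norm_cast
  have hint_F3 : Integrable (fun t : ℝ => (t:ℂ) ^ 2 * m / ((1 + t * m) * (1 - t))) ν := by
    apply jacobi_integrable_aux hν' hβ hmes3.aestronglyMeasurable (C := ‖m‖ * c0)
    intro t htl ht1
    have h1t : (0:ℝ) < 1 - t := by linarith
    have ht0 : (0:ℝ) ≤ t := le_trans hl0.le htl
    rw [hnorm3, abs_of_pos h1t]
    calc t ^ 2 * ‖m‖ / (‖1 + t * m‖ * (1 - t))
        ≤ ‖m‖ / (l * m.im * (1 - t)) := by
          apply div_le_div₀ (norm_nonneg m) _ (mul_pos hlmim h1t)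
            (mul_le_mul_of_nonneg_right (hdenlb t htl) h1t.le)
          have ht2 : t ^ 2 ≤ 1 := by nlinarith
          nlinarith [ht2, norm_nonneg m]
      _ = ‖m‖ * c0 / (1 - t) := by
          rw [hc0def]; field_simp
      _ ≤ ‖m‖ * c0 / (1 - t) ^ 2 :=
          hdiv_le _ t (by positivity) htl ht1
  have hint_q : Integrable (fun t : ℝ => t ^ 2 / (1 - t) ^ 2) ν := by
    apply jacobi_integrable_aux hν' hβ hmesq.aestronglyMeasurable (C := 1)
    intro t htl ht1
    have h2 : (0:ℝ) < (1 - t) ^ 2 := pow_pos (by linarith) 2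
    have : ‖t ^ 2 / (1 - t) ^ 2‖ = t ^ 2 / (1 - t) ^ 2 := by
      rw [Real.norm_eq_abs, abs_of_nonneg (by positivity)]
    rw [this]
    apply div_le_div₀ one_pos.le _ h2 le_rfl
    nlinarith [habs_t t htl ht1, abs_nonneg t, sq_abs t]
  have hnsq_lb : ∀ t : ℝ, l ≤ t → (l * m.im) ^ 2 ≤ Complex.normSq (1 + t * m) := by
    intro t htl
    rw [← Complex.sq_norm]
    exact pow_le_pow_left₀ hlmim.le (hdenlb t htl) 2
  have hint_s1 : Integrable (fun t : ℝ => t ^ 2 / Complex.normSq (1 + t * m)) ν := by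
    apply jacobi_integrable_aux hν' hβ hmess1.aestronglyMeasurable (C := c0 ^ 2)
    intro t htl ht1
    have hpos : (0:ℝ) < (l * m.im) ^ 2 := pow_pos hlmim 2
    have : ‖t ^ 2 / Complex.normSq (1 + t * m)‖ = t ^ 2 / Complex.normSq (1 + t * m) := by
      rw [Real.norm_eq_abs,
        abs_of_nonneg (div_nonneg (sq_nonneg t) (Complex.normSq_nonneg _))]
    rw [this]
    calc t ^ 2 / Complex.normSq (1 + t * m) ≤ 1 / (l * m.im) ^ 2 := by
          apply div_le_div₀ one_pos.le _ hpos (hnsq_lb t htl)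
          nlinarith [habs_t t htl ht1, abs_nonneg t, sq_abs t]
      _ = c0 ^ 2 := by rw [hc0def, one_div, inv_pow]
      _ ≤ c0 ^ 2 / (1 - t) ^ 2 := hconst_le _ t (by positivity) htl ht1
  -- notation for the integrals
  set I1 : ℂ := ∫ t, (t:ℂ) / (1 + t * m) ∂ν with hI1
  set I3 : ℂ := ∫ t, (t:ℂ) ^ 2 * m / ((1 + t * m) * (1 - t)) ∂ν with hI3
  set S : ℝ := ∫ t, t ^ 2 / Complex.normSq (1 + t * m) ∂ν with hSdef
  -- self-consistency gives the inverse formula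
  have hminv : m⁻¹ = -z + (d:ℂ)⁻¹ * I1 := by rw [hself, inv_inv]
  -- imaginary-part bound : normSq m * S ≤ d
  have hS_nonneg : 0 ≤ S := by
    apply integral_nonneg; intro t
    have := Complex.normSq_nonneg (1 + t * m); positivity
  have hSbound : Complex.normSq m * S ≤ d := by
    have hptim : ∀ t : ℝ, ((t:ℂ) / (1 + t * m)).im
        = -m.im * (t ^ 2 / Complex.normSq (1 + t * m)) := by
      intro t
      rw [Complex.div_im, him_eq]
      simp only [Complex.ofReal_im, Complex.ofReal_re]
      ring
    have him1 : I1.im = -m.im * S := by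
      have hcomm := integral_im (𝕜 := ℂ) hint_F1
      simp only [RCLike.im_to_complex] at hcomm
      rw [hI1, ← hcomm]
      calc ∫ t, ((t:ℂ) / (1 + t * m)).im ∂ν
          = ∫ t, -m.im * (t ^ 2 / Complex.normSq (1 + t * m)) ∂ν := by
            apply integral_congr_ae; filter_upwards with t; exact hptim t
        _ = -m.im * S := integral_const_mul _ _
    have heq := congrArg Complex.im hminv
    rw [Complex.inv_im, Complex.add_im, Complex.neg_im] at heq
    have hdinvim : ((d:ℂ)⁻¹ * I1).im = d⁻¹ * I1.im := by
      rw [← Complex.ofReal_inv, Complex.mul_im]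
      simp
    rw [hdinvim, him1] at heq
    -- heq : -m.im / normSq m = -z.im + d⁻¹ * (-m.im * S)
    have key1 : d⁻¹ * (m.im * S) = m.im / Complex.normSq m - z.im := by
      linear_combination heq
    have h3 : d⁻¹ * (m.im * S) ≤ m.im / Complex.normSq m := by
      rw [key1]; linarith
    have h6 := mul_le_mul_of_nonneg_right h3 (mul_pos hd hnsm).le
    have e1 : d⁻¹ * (m.im * S) * (d * Complex.normSq m)
        = m.im * (Complex.normSq m * S) := by
      field_simp
    have e2 : m.im / Complex.normSq m * (d * Complex.normSq m) = m.im * d := by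
      field_simp
    rw [e1, e2] at h6
    exact (mul_le_mul_iff_right₀ hm).1 h6
  -- Cauchy-Schwarz setup
  set Φ : ℝ → ℝ := fun t => |t| * ‖m‖ / ‖1 + t * m‖ with hΦdef
  set Ψ : ℝ → ℝ := fun t => |t| / |1 - t| with hΨdef
  have hΦ0 : ∀ t, 0 ≤ Φ t := fun t =>
    div_nonneg (mul_nonneg (abs_nonneg t) (norm_nonneg m)) (norm_nonneg _)
  have hΨ0 : ∀ t, 0 ≤ Ψ t := fun t => div_nonneg (abs_nonneg t) (abs_nonneg _)
  have hΦm : Measurable Φ :=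
    (continuous_abs.measurable.mul_const _).div
      (continuous_norm.measurable.comp
        (measurable_const.add (Complex.measurable_ofReal.mul_const m)))
  have hΨm : Measurable Ψ :=
    continuous_abs.measurable.div
      (continuous_abs.measurable.comp (measurable_const.sub measurable_id))
  have hmulpt : ∀ t : ℝ, ENNReal.ofReal ‖(t:ℂ) ^ 2 * m / ((1 + t * m) * (1 - t))‖
      = ENNReal.ofReal (Φ t) * ENNReal.ofReal (Ψ t) := by
    intro t
    rw [← ENNReal.ofReal_mul (hΦ0 t)]
    congr 1
    rw [hnorm3, hΦdef, hΨdef]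
    rw [div_mul_div_comm, ← sq_abs t]
    ring
  have hconj : Real.HolderConjugate 2 2 := Real.holderConjugate_iff.2 ⟨by norm_num, by norm_num⟩
  have hCS := ENNReal.lintegral_mul_le_Lp_mul_Lq ν hconj
    (f := fun t => ENNReal.ofReal (Φ t)) (g := fun t => ENNReal.ofReal (Ψ t))
    (hΦm.ennreal_ofReal).aemeasurable (hΨm.ennreal_ofReal).aemeasurable
  -- evaluate the two Cauchy-Schwarz factors
  have hφsq : ∫⁻ t, ENNReal.ofReal (Φ t) ^ (2:ℝ) ∂ν
      = ENNReal.ofReal (Complex.normSq m * S) := by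
    have hpt : ∀ t : ℝ, ENNReal.ofReal (Φ t) ^ (2:ℝ)
        = ENNReal.ofReal (Complex.normSq m * (t ^ 2 / Complex.normSq (1 + t * m))) := by
      intro t
      rw [show (2:ℝ) = ((2:ℕ):ℝ) by norm_num, ENNReal.rpow_natCast,
        ← ENNReal.ofReal_pow (hΦ0 t)]
      congr 1
      rw [hΦdef]
      rw [div_pow, mul_pow, sq_abs, Complex.sq_norm, Complex.sq_norm]
      ring
    rw [lintegral_congr hpt, ← ofReal_integral_eq_lintegral_ofReal
      (hint_s1.const_mul _) (ae_of_all _ fun t => mul_nonneg hnsm.le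
        (div_nonneg (sq_nonneg t) (Complex.normSq_nonneg _)))]
    rw [integral_const_mul, hSdef]
  have hψsq : ∫⁻ t, ENNReal.ofReal (Ψ t) ^ (2:ℝ) ∂ν = ENNReal.ofReal dplus := by
    have hpt : ∀ t : ℝ, ENNReal.ofReal (Ψ t) ^ (2:ℝ)
        = ENNReal.ofReal (t ^ 2 / (1 - t) ^ 2) := by
      intro t
      rw [show (2:ℝ) = ((2:ℕ):ℝ) by norm_num, ENNReal.rpow_natCast,
        ← ENNReal.ofReal_pow (hΨ0 t)]
      congr 1
      rw [hΨdef, div_pow, sq_abs, sq_abs]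
    rw [lintegral_congr hpt, ← ofReal_integral_eq_lintegral_ofReal hint_q
      (ae_of_all _ fun t => div_nonneg (sq_nonneg t) (sq_nonneg _)), hdplus]
  have hdplus0 : 0 ≤ dplus :=
    hdplus ▸ integral_nonneg fun t => div_nonneg (sq_nonneg t) (sq_nonneg _)
  have hsd : 0 < Real.sqrt d := Real.sqrt_pos.2 hd
  have hRHS : (∫⁻ t, ENNReal.ofReal (Φ t) ^ (2:ℝ) ∂ν) ^ (1/(2:ℝ))
      * (∫⁻ t, ENNReal.ofReal (Ψ t) ^ (2:ℝ) ∂ν) ^ (1/(2:ℝ))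
      ≤ ENNReal.ofReal (Real.sqrt d * Real.sqrt dplus) := by
    rw [hφsq, hψsq, ENNReal.ofReal_mul (Real.sqrt_nonneg d)]
    apply mul_le_mul'
    · calc (ENNReal.ofReal (Complex.normSq m * S)) ^ (1/(2:ℝ))
          ≤ (ENNReal.ofReal d) ^ (1/(2:ℝ)) :=
            ENNReal.rpow_le_rpow (ENNReal.ofReal_le_ofReal hSbound) (by norm_num)
        _ = ENNReal.ofReal (Real.sqrt d) := by
            rw [ENNReal.ofReal_rpow_of_pos hd, Real.sqrt_eq_rpow]
    · rcases eq_or_lt_of_le hdplus0 with h0 | h0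
      · rw [← h0]; simp
      · rw [ENNReal.ofReal_rpow_of_pos h0, Real.sqrt_eq_rpow]
  have hCS' : ∫⁻ t, ENNReal.ofReal (Φ t) * ENNReal.ofReal (Ψ t) ∂ν
      ≤ ENNReal.ofReal (Real.sqrt d * Real.sqrt dplus) := by
    refine le_trans ?_ hRHS
    simpa [Pi.mul_apply] using hCS
  have hlint : ∫⁻ t, ENNReal.ofReal ‖(t:ℂ) ^ 2 * m / ((1 + t * m) * (1 - t))‖ ∂ν
      ≤ ENNReal.ofReal (Real.sqrt d * Real.sqrt dplus) := by
    rw [lintegral_congr hmulpt]; exact hCS'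
  have hnormint : ‖I3‖ ≤ Real.sqrt d * Real.sqrt dplus := by
    rw [hI3]
    refine le_trans (norm_integral_le_integral_norm _) ?_
    rw [integral_eq_lintegral_of_nonneg_ae (ae_of_all _ fun t => norm_nonneg _)
      hmes3.norm.aestronglyMeasurable]
    calc (∫⁻ t, ENNReal.ofReal ‖(t:ℂ) ^ 2 * m / ((1 + t * m) * (1 - t))‖ ∂ν).toReal
        ≤ (ENNReal.ofReal (Real.sqrt d * Real.sqrt dplus)).toReal :=
          ENNReal.toReal_mono ENNReal.ofReal_ne_top hlint
      _ = Real.sqrt d * Real.sqrt dplus := ENNReal.toReal_ofReal (by positivity)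
  have hTabs : ‖T‖ = d⁻¹ * ‖I3‖ := by
    rw [hT, norm_neg, norm_mul, norm_inv, Complex.norm_real, Real.norm_eq_abs, abs_of_pos hd, hI3]
  have hsqrt_eq : d⁻¹ * (Real.sqrt d * Real.sqrt dplus) = Real.sqrt (dplus/d) := by
    rw [Real.sqrt_div hdplus0, eq_div_iff hsd.ne']
    field_simp
    linear_combination Real.sqrt dplus * Real.mul_self_sqrt hd.le
  have hc1 : ‖T‖ ≤ Real.sqrt (dplus/d) := by
    rw [hTabs, ← hsqrt_eq]
    exact mul_le_mul_of_nonneg_left hnormint (inv_nonneg.2 hd.le)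
  have hc2 : Real.sqrt (dplus/d) < 1 := by
    have h01 : dplus / d < 1 := (div_lt_one hd).2 hd_super
    calc Real.sqrt (dplus/d) < Real.sqrt 1 :=
        Real.sqrt_lt_sqrt (div_nonneg hdplus0 hd.le) h01
      _ = 1 := Real.sqrt_one
  -- the identity
  have hd0 : (d:ℂ) ≠ 0 := by exact_mod_cast hd.ne'
  set I2 : ℂ := ∫ t, (t:ℂ)/(1-t) ∂ν with hI2
  have hI2val : I2 = ((d * τplus : ℝ) : ℂ) := by
    have hcast : I2 = ((∫ t, t/(1-t) ∂ν : ℝ) : ℂ) := by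
      rw [hI2]
      have h := integral_ofReal (𝕜 := ℂ) (f := fun t => t/(1-t)) (μ := ν)
      refine Eq.trans ?_ h
      apply integral_congr_ae
      filter_upwards with t
      norm_cast
    rw [hcast, hτplus]
    push_cast
    field_simp
  have hptid : ∀ᵐ (t : ℝ) ∂ν, (t:ℂ)/(1+t*m) - (t:ℂ)/(1-t)
      = (-(1+m)/m) * ((t:ℂ)^2*m/((1+t*m)*(1-t))) := by
    filter_upwards [hae] with t ht
    obtain ⟨htl, ht1⟩ := ht
    have h1 : (1:ℂ) + t*m ≠ 0 := hden0 t htl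
    have h2 : (1:ℂ) - (t:ℂ) ≠ 0 := by
      rw [hcast1t t]
      exact Complex.ofReal_ne_zero.2 (ne_of_gt (by linarith : (0:ℝ) < 1 - t))
    field_simp
    ring
  have hIsub : I1 - I2 = (-(1+m)/m) * I3 := by
    rw [hI1, hI2, hI3, ← integral_sub hint_F1 hint_F2c,
      integral_congr_ae hptid]
    exact integral_const_mul _ _
  have e2' : I2 = (d:ℂ) * (τplus:ℂ) := by rw [hI2val]; push_cast; ring
  have hL : (m⁻¹ + 1) - (1 + (τplus:ℂ) - z) = (-(1+m)/m) * ((d:ℂ)⁻¹ * I3) := by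
    rw [hminv]
    have hI1e : I1 = I2 + (-(1+m)/m) * I3 := by linear_combination hIsub
    rw [hI1e, e2']
    field_simp
    ring
  have hR : (m⁻¹ + 1) * T = (-(1+m)/m) * ((d:ℂ)⁻¹ * I3) := by
    rw [hT]
    field_simp
  have hT1 : (1:ℂ) - T ≠ 0 := by
    intro h0
    have hTeq : T = 1 := by linear_combination -h0
    have hlt := lt_of_le_of_lt hc1 hc2
    rw [hTeq] at hlt
    simp at hlt
  have hLc : (Lplus:ℂ) = 1 + (τplus:ℂ) := by rw [hLplus]; push_cast; ring
  have hkey : (1/m + 1) * (1 - T) = (Lplus:ℂ) - z := by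
    rw [one_div, hLc]
    have hstep : (m⁻¹ + 1) - (1 + (τplus:ℂ) - z) = (m⁻¹ + 1) * T := hL.trans hR.symm
    linear_combination hstep
  have hc3 : 1/m + 1 = ((Lplus:ℂ) - z)/(1 - T) := by
    rw [eq_div_iff hT1, hkey]
  -- final bound
  have hsplus : Real.sqrt dplus < Real.sqrt d := Real.sqrt_lt_sqrt hdplus0 hd_super
  have hposc : 0 < (Real.sqrt d - Real.sqrt dplus)/Real.sqrt d :=
    div_pos (sub_pos.2 hsplus) hsd
  have hlb : (Real.sqrt d - Real.sqrt dplus)/Real.sqrt d ≤ ‖1 - T‖ := by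
    have h1 : 1 - ‖T‖ ≤ ‖1 - T‖ := by
      have := norm_sub_norm_le (1:ℂ) T
      simpa using this
    have h2 : (Real.sqrt d - Real.sqrt dplus)/Real.sqrt d
        = 1 - Real.sqrt dplus/Real.sqrt d := by
      field_simp
    have h3 : Real.sqrt dplus / Real.sqrt d = Real.sqrt (dplus/d) :=
      (Real.sqrt_div hdplus0 d).symm
    rw [h2, h3]
    linarith [hc1, h1]
  have hc4 : ‖1/m + 1‖
      ≤ Real.sqrt d / (Real.sqrt d - Real.sqrt dplus) * ‖(Lplus:ℂ) - z‖ := by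
    rw [hc3, norm_div]
    calc ‖(Lplus:ℂ) - z‖ / ‖1 - T‖
        ≤ ‖(Lplus:ℂ) - z‖ / ((Real.sqrt d - Real.sqrt dplus)/Real.sqrt d) :=
          div_le_div_of_nonneg_left (norm_nonneg _) hposc hlb
      _ = Real.sqrt d / (Real.sqrt d - Real.sqrt dplus) * ‖(Lplus:ℂ) - z‖ := by
          rw [div_div_eq_mul_div]
          ring
  exact ⟨hc1, hc2, hc3, hc4⟩
end

section
/- Let ν be a Jacobi measure with parameters 0 < l < 1 and β > 1, let d > 0, let z = E + iη with η > 0, and let m ∈ ℂ with Im m > 0 satisfy the self-consistent equation m = (−z + d^{-1}∫_l^1 t/(1 + t m) dν(t))^{-1}. Set R₂(z) := d^{-1}∫_l^1 t²|m|²/|t m + 1|² dν(t). Then 1 − R₂(z) = η·|m|²/Im m, and if moreover C^{-1} η ≤ Im m ≤ C η for some constant C ≥ 1, then |m|²/C ≤ 1 − R₂(z) ≤ C·|m|²; in particular, if in addition |m| ≥ 1, then 0 ≤ R₂(z) ≤ 1 − 1/C. -/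
open MeasureTheory Set

/-- Auxiliary: the key identity `1 - R₂ = η|m|²/Im m`. -/
theorem R2_key
    (ν : Measure ℝ) (l β : ℝ) (f : ℝ → ℝ) (Z : ℝ)
    (hν : IsJacobi ν l β f Z)
    (d : ℝ) (hd : 0 < d)
    (E η : ℝ) (z : ℂ) (hz : z = Complex.mk E η)
    (m : ℂ) (hm : 0 < m.im)
    (hself : m = (-z + (d : ℂ)⁻¹ * ∫ t, (t : ℂ) / (1 + t * m) ∂ν)⁻¹)
    (R₂ : ℝ)
    (hR₂ : R₂ = d⁻¹ * ∫ t, t ^ 2 * ‖m‖ ^ 2 / ‖(t * m + 1 : ℂ)‖ ^ 2 ∂ν) :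
    1 - R₂ = η * ‖m‖ ^ 2 / m.im := by
  haveI : IsProbabilityMeasure ν := hν.prob
  have hmne : m ≠ 0 := by intro h; rw [h] at hm; simp at hm
  have hns : 0 < Complex.normSq m := Complex.normSq_pos.mpr hmne
  have himne : m.im ≠ 0 := ne_of_gt hm
  have hden : ∀ t : ℝ, (1 + (t : ℂ) * m) ≠ 0 := by
    intro t h
    have h1 : t * m.im = 0 := by
      have := congrArg Complex.im h; simpa using this
    have ht : t = 0 := by
      rcases mul_eq_zero.mp h1 with h' | h'
      · exact h'
      · exact absurd h' himne
    rw [ht] at h; simp at h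
  have hdenpos : ∀ t : ℝ, 0 < Complex.normSq (1 + (t : ℂ) * m) :=
    fun t => Complex.normSq_pos.mpr (hden t)
  set g : ℝ → ℂ := fun t => (t : ℂ) / (1 + (t : ℂ) * m) with hg
  -- a.e. membership in Icc l 1
  have hmem : ∀ᵐ t ∂ν, t ∈ Icc l 1 := by
    have hind : (fun t => ENNReal.ofReal (jacobiDensity l β Z f t))
        = (Icc l 1).indicator (fun t => ENNReal.ofReal (Z⁻¹ * (1 - t) ^ β * f t)) := by
      funext t
      by_cases ht : t ∈ Icc l 1 <;> simp [jacobiDensity, ht]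
    have hac : ν ≪ volume.restrict (Icc l 1) := by
      rw [hν.eq_density, hind, withDensity_indicator measurableSet_Icc]
      exact withDensity_absolutelyContinuous _ _
    exact hac.ae_le (ae_restrict_mem measurableSet_Icc)
  -- integrability of g
  have hgc : Continuous g := by
    apply Continuous.div Complex.continuous_ofReal
    · exact continuous_const.add (Complex.continuous_ofReal.mul continuous_const)
    · exact hden
  have hl := hν.l_pos
  have hbound : ∀ᵐ t ∂ν, ‖g t‖ ≤ 1 / (l * m.im) := by
    refine hmem.mono fun t ht => ?_
    have h1 : |t| ≤ 1 := abs_le.mpr ⟨by linarith [ht.1], ht.2⟩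
    have h2 : l * m.im ≤ ‖1 + (t : ℂ) * m‖ := by
      have him' : (1 + (t : ℂ) * m).im = t * m.im := by simp
      calc l * m.im ≤ t * m.im := by nlinarith [ht.1]
        _ ≤ |(1 + (t : ℂ) * m).im| := him' ▸ le_abs_self _
        _ ≤ ‖1 + (t : ℂ) * m‖ := Complex.abs_im_le_norm _
    have h3 : ‖g t‖ = |t| / ‖1 + (t : ℂ) * m‖ := by
      simp [hg, map_div₀]
    rw [h3]
    exact div_le_div₀ (by norm_num) h1 (by positivity) h2
  have hint : Integrable g ν :=
    ⟨hgc.aestronglyMeasurable, HasFiniteIntegral.of_bounded hbound⟩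
  -- imaginary part pointwise
  have him_pt : ∀ t : ℝ, (g t).im = -m.im * (t ^ 2 / Complex.normSq (1 + (t : ℂ) * m)) := by
    intro t
    have := hdenpos t
    rw [hg]
    simp only [Complex.div_im, Complex.ofReal_re, Complex.ofReal_im, Complex.add_im,
      Complex.add_re, Complex.one_im, Complex.one_re, Complex.mul_im, Complex.mul_re]
    ring
  -- J
  set J : ℝ := ∫ t, t ^ 2 / Complex.normSq (1 + (t : ℂ) * m) ∂ν with hJ
  have hIim : (∫ t, g t ∂ν).im = -m.im * J := by
    have h' : ∫ t, (g t).im ∂ν = (∫ t, g t ∂ν).im := by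
      simpa using integral_im (𝕜 := ℂ) hint
    rw [← h']
    calc (∫ t, (g t).im ∂ν)
        = ∫ t, -m.im * (t ^ 2 / Complex.normSq (1 + (t : ℂ) * m)) ∂ν := by
          exact integral_congr_ae (Filter.Eventually.of_forall him_pt)
      _ = -m.im * J := by rw [hJ, integral_const_mul]
  -- R₂ in terms of J
  have hR₂' : R₂ = d⁻¹ * (Complex.normSq m * J) := by
    rw [hR₂]
    congr 1
    calc (∫ t, t ^ 2 * ‖m‖ ^ 2 / ‖(t : ℂ) * m + 1‖ ^ 2 ∂ν)
        = ∫ t, Complex.normSq m * (t ^ 2 / Complex.normSq (1 + (t : ℂ) * m)) ∂ν := by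
          apply integral_congr_ae (Filter.Eventually.of_forall fun t => ?_)
          rw [Complex.sq_norm, Complex.sq_norm]
          rw [show (t : ℂ) * m + 1 = 1 + (t : ℂ) * m from by ring]
          ring
      _ = Complex.normSq m * J := by rw [hJ, integral_const_mul]
  -- self-consistent equation, imaginary part
  have hw : m⁻¹ = -z + (d : ℂ)⁻¹ * ∫ t, g t ∂ν := by
    conv_lhs => rw [hself]
    exact inv_inv _
  have hwim := congrArg Complex.im hw
  rw [Complex.inv_im] at hwim
  have hzim : z.im = η := by rw [hz]
  have hdim : ((d : ℂ)⁻¹ * ∫ t, (t : ℂ) / (1 + (t : ℂ) * m) ∂ν).im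
      = d⁻¹ * (∫ t, g t ∂ν).im := by
    rw [← Complex.ofReal_inv]
    simp [Complex.mul_im, hg]
  rw [Complex.add_im, Complex.neg_im, hzim, hdim, hIim] at hwim
  -- now hwim : -m.im / normSq m = -η + d⁻¹ * (-m.im * J)
  rw [hR₂', Complex.sq_norm]
  have hdne : d ≠ 0 := ne_of_gt hd
  field_simp at hwim ⊢
  nlinarith [hwim, hns, hm]

/-- `1 − R₂(z) = η|m|²/Im m`; if moreover `Im m ∼ η` (up to a constant `C`)
then `|m|²/C ≤ 1 − R₂(z) ≤ C|m|²`, and if additionally `|m| ≥ 1` then `R₂(z) ≤ 1 − 1/C`. -/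
theorem R2_estimate
    (ν : Measure ℝ) (l β : ℝ) (f : ℝ → ℝ) (Z : ℝ)
    (hν : IsJacobi ν l β f Z) (hβ : 1 < β)
    (d : ℝ) (hd : 0 < d)
    (E η : ℝ) (hη : 0 < η) (z : ℂ) (hz : z = Complex.mk E η)
    (m : ℂ) (hm : 0 < m.im)
    (hself : m = (-z + (d : ℂ)⁻¹ * ∫ t, (t : ℂ) / (1 + t * m) ∂ν)⁻¹)
    (R₂ : ℝ)
    (hR₂ : R₂ = d⁻¹ * ∫ t, t ^ 2 * ‖m‖ ^ 2 / ‖(t * m + 1 : ℂ)‖ ^ 2 ∂ν) :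
    1 - R₂ = η * ‖m‖ ^ 2 / m.im ∧
    (∀ C : ℝ, 1 ≤ C → C⁻¹ * η ≤ m.im → m.im ≤ C * η →
      (‖m‖ ^ 2 / C ≤ 1 - R₂ ∧ 1 - R₂ ≤ C * ‖m‖ ^ 2) ∧
      (1 ≤ ‖m‖ → 0 ≤ R₂ ∧ R₂ ≤ 1 - 1 / C)) := by
  have key := R2_key ν l β f Z hν d hd E η z hz m hm hself R₂ hR₂
  refine ⟨key, fun C hC h1 h2 => ?_⟩
  have hC0 : (0 : ℝ) < C := lt_of_lt_of_le one_pos hC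
  have habs2 : (0 : ℝ) ≤ ‖m‖ ^ 2 := sq_nonneg _
  have hlow : ‖m‖ ^ 2 / C ≤ 1 - R₂ := by
    rw [key, div_le_div_iff₀ hC0 hm]
    nlinarith
  have hup : 1 - R₂ ≤ C * ‖m‖ ^ 2 := by
    rw [key, div_le_iff₀ hm]
    have hCη : η ≤ C * m.im := by
      have := mul_le_mul_of_nonneg_left h1 (le_of_lt hC0)
      calc η = C * (C⁻¹ * η) := by field_simp
        _ ≤ C * m.im := this
    nlinarith
  refine ⟨⟨hlow, hup⟩, fun habs => ⟨?_, ?_⟩⟩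
  · rw [hR₂]
    apply mul_nonneg (by positivity)
    exact integral_nonneg fun t => by positivity
  · have h1m : 1 ≤ ‖m‖ ^ 2 := by nlinarith
    have : 1 / C ≤ ‖m‖ ^ 2 / C := by gcongr
    linarith
end
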